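/- arXiv:2311.00546 — 2 statements merged into one kernel-verified Lean document; each statement's English description precedes it below -/
import Mathlib

section
/- Let C be a field of characteristic p > 0 and x ∈ 1 + X·C⟦X⟧. The map ℤ_p → 1 + X·C⟦X⟧, α ↦ x^α, is a group homomorphism from (ℤ_p, +) to the multiplicative group 1 + X·C⟦X⟧, i.e. x^{α+β} = x^α · x^β for all α, β ∈ ℤ_p. -/
/-- **`α ↦ x^α` is a homomorphism `(ℤ_p, +) → (1 + X·C⟦X⟧, ·)`.**
Let `C` be a field of characteristic `p > 0` and `x ∈ 1 + X·C⟦X⟧`.  Suppose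
`pow : ℤ_p → C⟦X⟧` sends each `α` to the `X`-adic limit of the partial products
`Π_{i=0}^{n-1} x^{αᵢ pⁱ} = x^(α mod pⁿ)` (here `α.appr n = Σ_{i<n} αᵢ pⁱ` is the canonical
representative of `α` modulo `pⁿ` given by its `p`-adic digits).  Then
`pow (α + β) = pow α * pow β` for all `α, β ∈ ℤ_p`. -/
theorem padic_power_is_group_hom {C : Type*} [Field C] (p : ℕ) [Fact p.Prime] [CharP C p]
    (x : PowerSeries C) (hx : PowerSeries.constantCoeff x = 1)
    (pow : ℤ_[p] → PowerSeries C)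
    (hpow : ∀ (α : ℤ_[p]) (m : ℕ), ∃ N : ℕ, ∀ n ≥ N,
      (PowerSeries.X : PowerSeries C) ^ m ∣ (pow α - x ^ α.appr n)) :
    ∀ α β : ℤ_[p], pow (α + β) = pow α * pow β := by
  haveI : CharP (PowerSeries C) p :=
    charP_of_injective_ringHom (PowerSeries.C_injective (R := C)) p
  have hp1 : 1 < p := (Fact.out : p.Prime).one_lt
  have hXdvd : (PowerSeries.X : PowerSeries C) ∣ x - 1 := by
    rw [PowerSeries.X_dvd_iff]; simp [hx]
  -- key: if a ≡ b mod p^n then X^(p^n) ∣ x^a - x^b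
  have main : ∀ (n a b : ℕ), a ≤ b → a ≡ b [MOD p^n] →
      (PowerSeries.X : PowerSeries C) ^ (p^n) ∣ x ^ a - x ^ b := by
    intro n a b hab h
    obtain ⟨k, hk⟩ := (Nat.modEq_iff_dvd' hab).mp h
    have hb : x ^ b = x ^ a * (x ^ (p^n)) ^ k := by
      rw [← pow_mul, ← pow_add]; congr 1; omega
    have h1 : (PowerSeries.X : PowerSeries C) ^ (p^n) ∣ (x ^ (p^n)) ^ k - 1 := by
      have hd : x ^ (p^n) - 1 ∣ (x ^ (p^n)) ^ k - 1 ^ k := sub_dvd_pow_sub_pow _ _ _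
      have he : x ^ (p^n) - 1 = (x - 1) ^ (p^n) := by
        rw [sub_pow_char_pow]; simp
      refine dvd_trans ?_ (by simpa using hd)
      rw [he]; exact pow_dvd_pow_of_dvd hXdvd _
    have : x ^ a - x ^ b = -(x ^ a * ((x ^ (p^n)) ^ k - 1)) := by
      rw [hb]; ring
    rw [this]
    exact Dvd.dvd.neg_right (Dvd.dvd.mul_left h1 _)
  have key : ∀ (n a b : ℕ), a ≡ b [MOD p^n] →
      (PowerSeries.X : PowerSeries C) ^ (p^n) ∣ x ^ a - x ^ b := by
    intro n a b h
    rcases le_total a b with hab | hab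
    · exact main n a b hab h
    · have := main n b a hab h.symm
      simpa using this.neg_right
  intro α β
  rw [← sub_eq_zero]
  set f := pow (α + β) - pow α * pow β with hf
  -- show divisible by X^m for all m, hence zero
  have hdvd : ∀ m : ℕ, (PowerSeries.X : PowerSeries C) ^ m ∣ f := by
    intro m
    obtain ⟨N1, h1⟩ := hpow α m
    obtain ⟨N2, h2⟩ := hpow β m
    obtain ⟨N3, h3⟩ := hpow (α + β) m
    set n := max (max N1 N2) (max N3 m) with hn
    have hpn : m ≤ p ^ n :=
      le_trans (le_of_lt (Nat.lt_pow_self (n := m) hp1)) (Nat.pow_le_pow_right (by omega) (by omega))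
    have hA := h1 n (by omega)
    have hB := h2 n (by omega)
    have hAB := h3 n (by omega)
    -- congruence of appr's
    have hcong : (α + β).appr n ≡ α.appr n + β.appr n [MOD p ^ n] := by
      have d1 := PadicInt.appr_spec n α
      have d2 := PadicInt.appr_spec n β
      have d3 := PadicInt.appr_spec n (α + β)
      rw [Ideal.mem_span_singleton] at d1 d2 d3
      have hz : ((p : ℤ_[p]) ^ n) ∣
          (((α + β).appr n : ℤ) - ((α.appr n : ℤ) + (β.appr n : ℤ)) : ℤ) := by
        have : ((((α + β).appr n : ℤ) - ((α.appr n : ℤ) + (β.appr n : ℤ)) : ℤ) : ℤ_[p])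
            = -((α + β) - (α + β).appr n) + ((α - α.appr n) + (β - β.appr n)) := by
          push_cast
          ring
        rw [this]
        exact dvd_add d3.neg_right (dvd_add d1 d2)
      rw [PadicInt.pow_p_dvd_int_iff] at hz
      have : ((p : ℤ) ^ n) ∣ (((α.appr n : ℤ) + (β.appr n : ℤ)) - ((α + β).appr n : ℤ)) := by
        simpa [neg_sub] using hz.neg_right
      rw [Nat.modEq_iff_dvd]
      push_cast at this ⊢
      convert this using 1
    have hmid : (PowerSeries.X : PowerSeries C) ^ m ∣
        x ^ (α + β).appr n - x ^ (α.appr n + β.appr n) :=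
      dvd_trans (pow_dvd_pow _ hpn) (key n _ _ hcong)
    have hsplit : f = (pow (α + β) - x ^ (α + β).appr n)
        + (x ^ (α + β).appr n - x ^ (α.appr n + β.appr n))
        + (x ^ α.appr n * (x ^ β.appr n - pow β) + (x ^ α.appr n - pow α) * pow β) := by
      rw [hf, pow_add]; ring
    rw [hsplit]
    refine dvd_add (dvd_add hAB hmid) (dvd_add ?_ ?_)
    · exact Dvd.dvd.mul_left (by simpa [neg_sub] using hB.neg_right) _
    · exact Dvd.dvd.mul_right (by simpa [neg_sub] using hA.neg_right) _
  have : f = 0 := by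
    ext i
    have := (PowerSeries.X_pow_dvd_iff.mp (hdvd (i + 1))) i (by omega)
    simpa using this
  exact this
end

section
/- Let C be a field of characteristic p > 0 and x ∈ 1 + X·C⟦X⟧. If α ∈ ℤ_p is a rational integer k ∈ ℤ ⊆ ℤ_p, then the p-adic power x^α (defined via the digit expansion of α as an X-adic limit) coincides with the ordinary k-th power x^k in the group 1 + X·C⟦X⟧. -/
private lemma unit_zpow_sub_one_dvd {R : Type*} [CommRing R] (d : R) (v : Rˣ)
    (h : d ∣ (v : R) - 1) (c : ℤ) : d ∣ ((v ^ c : Rˣ) : R) - 1 := by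
  have hinv : d ∣ ((v⁻¹ : Rˣ) : R) - 1 := by
    have hmul : ((v⁻¹ : Rˣ) : R) * (v : R) = 1 := by exact_mod_cast Units.inv_mul v
    have : ((v⁻¹ : Rˣ) : R) - 1 = ((v⁻¹ : Rˣ) : R) * (1 - (v : R)) := by
      rw [mul_sub, mul_one, hmul]
    rw [this]
    exact Dvd.dvd.mul_left (dvd_sub_comm.mp h) _
  rcases c with n | n
  · simpa using (h.trans (sub_dvd_pow_sub_pow (v : R) 1 n)).trans
      (by simp [Units.val_pow_eq_pow_val])
  · have : ((v ^ (Int.negSucc n) : Rˣ) : R) = ((v⁻¹ : Rˣ) : R) ^ (n + 1) := by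
      rw [zpow_negSucc, ← inv_pow, Units.val_pow_eq_pow_val]
    rw [this]
    simpa using hinv.trans (sub_dvd_pow_sub_pow ((v⁻¹ : Rˣ) : R) 1 (n + 1))

/-- **`p`-adic powers extend ordinary integer powers.**
Let `C` be a field of characteristic `p > 0` and `x ∈ 1 + X·C⟦X⟧` (a unit `u` of `C⟦X⟧`).
If `α ∈ ℤ_p` is a rational integer `k ∈ ℤ ⊆ ℤ_p`, then the `p`-adic power `x^α` — the
`X`-adic limit `y` of the partial digit products `x^(α mod pⁿ)` (with
`α.appr n = Σ_{i<n} αᵢ pⁱ` the digit partial sums of `α`) — coincides with the ordinary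
`k`-th power `u^k` in the group of units of `C⟦X⟧`. -/
theorem padic_power_of_integer_eq_zpow {C : Type*} [Field C] (p : ℕ) [Fact p.Prime]
    [CharP C p] (x : PowerSeries C) (hx : PowerSeries.constantCoeff x = 1)
    (u : (PowerSeries C)ˣ) (hu : (u : PowerSeries C) = x)
    (k : ℤ) (y : PowerSeries C)
    (hy : ∀ m : ℕ, ∃ N : ℕ, ∀ n ≥ N,
      (PowerSeries.X : PowerSeries C) ^ m ∣ (y - x ^ ((k : ℤ_[p]).appr n))) :
    y = ((u ^ k : (PowerSeries C)ˣ) : PowerSeries C) := by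
  have hp1 : 1 < p := (Fact.out : p.Prime).one_lt
  haveI : CharP (PowerSeries C) p :=
    charP_of_injective_ringHom (PowerSeries.C_injective (R := C)) p
  -- X ∣ u - 1
  have hX : (PowerSeries.X : PowerSeries C) ∣ (u : PowerSeries C) - 1 := by
    rw [PowerSeries.X_dvd_iff]
    simp [hu, hx]
  -- X^(p^n) ∣ u^(p^n) - 1
  have hfrob : ∀ n : ℕ, (PowerSeries.X : PowerSeries C) ^ (p ^ n) ∣
      ((u ^ (p ^ n : ℕ) : (PowerSeries C)ˣ) : PowerSeries C) - 1 := by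
    intro n
    have : ((u : PowerSeries C)) ^ (p ^ n) - 1
        = ((u : PowerSeries C) - 1) ^ (p ^ n) := by
      have := add_pow_char_pow ((u : PowerSeries C) - 1) 1 p n
      simp only [one_pow] at this
      rw [sub_add_cancel] at this
      rw [this]
      ring
    rw [Units.val_pow_eq_pow_val, this]
    exact pow_dvd_pow_of_dvd hX _
  -- p^n ∣ k - appr n in ℤ
  have happr : ∀ n : ℕ, ((p : ℤ) ^ n) ∣ (k - ((k : ℤ_[p]).appr n : ℤ)) := by
    intro n
    have h1 : (k : ℤ_[p]) - (((k : ℤ_[p]).appr n : ℕ) : ℤ_[p]) ∈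
        Ideal.span {(p : ℤ_[p]) ^ n} := PadicInt.appr_spec n _
    rw [← PadicInt.ker_toZModPow n] at h1
    have h2 : (PadicInt.toZModPow n) ((k : ℤ_[p]) - (((k : ℤ_[p]).appr n : ℕ) : ℤ_[p])) = 0 := h1
    have h3 : (((k - ((k : ℤ_[p]).appr n : ℤ) : ℤ)) : ZMod (p ^ n)) = 0 := by
      have : (((k - ((k : ℤ_[p]).appr n : ℤ) : ℤ)) : ZMod (p ^ n))
          = (PadicInt.toZModPow n) (((k - ((k : ℤ_[p]).appr n : ℤ) : ℤ) : ℤ_[p])) := by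
        rw [map_intCast]
      rw [this]
      push_cast
      convert h2 using 2
    have := (ZMod.intCast_zmod_eq_zero_iff_dvd _ _).mp h3
    exact_mod_cast this
  -- X^m ∣ y - u^k for all m
  have key : ∀ m : ℕ, (PowerSeries.X : PowerSeries C) ^ m ∣
      y - ((u ^ k : (PowerSeries C)ˣ) : PowerSeries C) := by
    intro m
    obtain ⟨N, hN⟩ := hy m
    set n := max N m with hn
    obtain ⟨c, hc⟩ := happr n
    -- u^k - u^(appr n) = u^(appr n) * (u^(p^n * c) - 1)
    have hdvd2 : (PowerSeries.X : PowerSeries C) ^ (p ^ n) ∣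
        ((u ^ k : (PowerSeries C)ˣ) : PowerSeries C) - x ^ ((k : ℤ_[p]).appr n) := by
      have heq : (u ^ k : (PowerSeries C)ˣ)
          = (u ^ (((k : ℤ_[p]).appr n : ℤ)) : (PowerSeries C)ˣ)
            * ((u ^ (p ^ n : ℕ) : (PowerSeries C)ˣ) ^ c) := by
        have e1 : (u ^ (p ^ n : ℕ)) ^ c = u ^ ((p : ℤ) ^ n * c) := by
          rw [← zpow_natCast u (p ^ n), ← zpow_mul]
          congr 1
        rw [e1, ← zpow_add]
        congr 1
        linarith [hc]
      have hx2 : x ^ ((k : ℤ_[p]).appr n)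
          = ((u ^ (((k : ℤ_[p]).appr n : ℤ)) : (PowerSeries C)ˣ) : PowerSeries C) := by
        rw [zpow_natCast, Units.val_pow_eq_pow_val, hu]
      rw [heq, hx2, Units.val_mul]
      have : ((u ^ (((k : ℤ_[p]).appr n : ℤ)) : (PowerSeries C)ˣ) : PowerSeries C)
            * (((u ^ (p ^ n : ℕ) : (PowerSeries C)ˣ) ^ c : (PowerSeries C)ˣ) : PowerSeries C)
          - ((u ^ (((k : ℤ_[p]).appr n : ℤ)) : (PowerSeries C)ˣ) : PowerSeries C)
          = ((u ^ (((k : ℤ_[p]).appr n : ℤ)) : (PowerSeries C)ˣ) : PowerSeries C)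
            * ((((u ^ (p ^ n : ℕ) : (PowerSeries C)ˣ) ^ c : (PowerSeries C)ˣ) : PowerSeries C) - 1) := by
        ring
      rw [this]
      exact Dvd.dvd.mul_left
        (unit_zpow_sub_one_dvd _ _ (hfrob n) c) _
    have hmn : m ≤ p ^ n := le_trans (le_max_right N m) (le_of_lt (Nat.lt_pow_self (n := n) hp1))
    have h1 : (PowerSeries.X : PowerSeries C) ^ m ∣ y - x ^ ((k : ℤ_[p]).appr n) :=
      hN n (le_max_left N m)
    have h2 : (PowerSeries.X : PowerSeries C) ^ m ∣
        ((u ^ k : (PowerSeries C)ˣ) : PowerSeries C) - x ^ ((k : ℤ_[p]).appr n) :=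
      (pow_dvd_pow _ hmn).trans hdvd2
    have := dvd_sub h1 h2
    simpa using this
  -- conclude
  have : y - ((u ^ k : (PowerSeries C)ˣ) : PowerSeries C) = 0 := by
    ext j
    have := (PowerSeries.X_pow_dvd_iff.mp (key (j + 1))) j (Nat.lt_succ_self j)
    simpa using this
  exact sub_eq_zero.mp this
end
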